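/- Let J₀ = {s ∈ S : M̄_ss = 0} and let E ⊆ ℝ^S be the column space of Φ. Consider the condition (★): every v ∈ E with v(s) = 0 for all s ∉ J₀ is the zero vector. If (★) holds, then the matrix C = −ΦᵀM̄(I−Q)Φ is negative definite: there exists c > 0 such that yᵀCy ≤ −c‖y‖₂² for all y ∈ ℝ^n. Furthermore, C is nonsingular if and only if condition (★) holds. -/

import Mathlib

open Matrix

noncomputable section

/-- `Q = I − (I−PΓΛ)⁻¹(I−PΓ)`. -/
def Qof {S : Type*} [Fintype S] [DecidableEq S]
    (P : Matrix S S ℝ) (γf lamf : S → ℝ) : Matrix S S ℝ :=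
  1 - (1 - P * Matrix.diagonal γf * Matrix.diagonal lamf)⁻¹ * (1 - P * Matrix.diagonal γf)

/-- The diagonal vector of `M̄`: `(d_i)ᵀ(I−Q)⁻¹`, with `d_i(s) = d(s)·i(s)`. -/
def MdiagOf {S : Type*} [Fintype S] [DecidableEq S]
    (P : Matrix S S ℝ) (γf lamf d ifun : S → ℝ) : S → ℝ :=
  Matrix.vecMul (fun s => d s * ifun s) (1 - Qof P γf lamf)⁻¹

/-- `C = −ΦᵀM̄(I−Q)Φ`. -/
def Cof {S : Type*} [Fintype S] [DecidableEq S] {n : ℕ}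
    (P : Matrix S S ℝ) (γf lamf d ifun : S → ℝ)
    (Φ : Matrix S (Fin n) ℝ) : Matrix (Fin n) (Fin n) ℝ :=
  -(Φ.transpose * Matrix.diagonal (MdiagOf P γf lamf d ifun) * (1 - Qof P γf lamf) * Φ)

end

section helpers
variable {S : Type} [Fintype S] [DecidableEq S]

lemma pow_entry_nonneg (X : Matrix S S ℝ) (hX0 : ∀ s s', 0 ≤ X s s') :
    ∀ k s s', 0 ≤ (X ^ k) s s' := by
  intro k
  induction k with
  | zero => intro s s'; simp [Matrix.one_apply]; split <;> norm_num
  | succ k ih =>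
    intro s s'
    rw [pow_succ, Matrix.mul_apply]
    exact Finset.sum_nonneg fun t _ => mul_nonneg (ih s t) (hX0 t s')

lemma rowsum_pow_mul (X : Matrix S S ℝ) (k j : ℕ) (s : S) :
    ∑ s', (X ^ (k + j)) s s' = ∑ t, (X ^ k) s t * (∑ s', (X ^ j) t s') := by
  rw [pow_add]
  simp only [Matrix.mul_apply]
  rw [Finset.sum_comm]
  simp [Finset.mul_sum]

lemma pow_rowsum_le (X : Matrix S S ℝ) (hX0 : ∀ s s', 0 ≤ X s s')
    (hX1 : ∀ s, ∑ s', X s s' ≤ 1) :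
    ∀ k s, ∑ s', (X ^ k) s s' ≤ 1 := by
  intro k
  induction k with
  | zero => intro s; simp [Matrix.one_apply]
  | succ k ih =>
    intro s
    have := rowsum_pow_mul X 1 k s
    simp only [pow_one] at this
    rw [show k + 1 = 1 + k by ring, this]
    calc ∑ t, X s t * (∑ s', (X ^ k) t s') ≤ ∑ t, X s t :=
          Finset.sum_le_sum fun t _ => by
            nlinarith [ih t, hX0 s t, Finset.sum_nonneg (fun s' (_ : s' ∈ Finset.univ) => pow_entry_nonneg X hX0 k t s')]
      _ ≤ 1 := hX1 s

/-- A nonempty "closed class with stochastic rows" forces `1 - X` to be singular. -/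
lemma closedClass_not_isUnit (X : Matrix S S ℝ) (hX0 : ∀ s s', 0 ≤ X s s')
    (hX1 : ∀ s, ∑ s', X s s' ≤ 1)
    (U : Set S) [DecidablePred (· ∈ U)] (hne : U.Nonempty)
    (hU : ∀ s ∈ U, ∑ s' ∈ Finset.univ.filter (· ∈ U), X s s' = 1) :
    ¬ IsUnit (1 - X) := by
  -- off-block entries vanish
  have hoff : ∀ s ∈ U, ∀ s', s' ∉ U → X s s' = 0 := by
    intro s hs s' hs'
    have hsplit : ∑ t ∈ Finset.univ.filter (· ∈ U), X s t
        + ∑ t ∈ Finset.univ.filter (· ∉ U), X s t = ∑ t, X s t := by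
      rw [Finset.sum_filter_add_sum_filter_not]
    have h2 : ∑ t ∈ Finset.univ.filter (· ∉ U), X s t ≤ 0 := by
      have := hX1 s; rw [hU s hs] at hsplit; linarith
    have h3 : ∀ t ∈ Finset.univ.filter (· ∉ U), 0 ≤ X s t := fun t _ => hX0 s t
    have h4 : ∑ t ∈ Finset.univ.filter (· ∉ U), X s t = 0 :=
      le_antisymm h2 (Finset.sum_nonneg h3)
    have := (Finset.sum_eq_zero_iff_of_nonneg h3).mp h4 s' (by simp [hs'])
    exact this
  intro hunit
  rw [Matrix.isUnit_iff_isUnit_det] at hunit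
  have hdet : ((1 - X).submatrix (Equiv.sumCompl (· ∈ U)) (Equiv.sumCompl (· ∈ U))).det
      = (1 - X).det := Matrix.det_submatrix_equiv_self _ _
  have h12 : ((1 - X).submatrix (Equiv.sumCompl (· ∈ U)) (Equiv.sumCompl (· ∈ U))).toBlocks₁₂ = 0 := by
    ext ⟨s, hs⟩ ⟨s', hs'⟩
    simp only [Matrix.toBlocks₁₂, Matrix.of_apply, Matrix.submatrix_apply,
      Equiv.sumCompl_apply_inl, Equiv.sumCompl_apply_inr, Matrix.zero_apply]
    have hne' : s ≠ s' := fun h => hs' (h ▸ hs)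
    simp [Matrix.sub_apply, Matrix.one_apply, hne', hoff s hs s' hs']
  have hblock : (1 - X).submatrix (Equiv.sumCompl (· ∈ U)) (Equiv.sumCompl (· ∈ U))
      = Matrix.fromBlocks ((1 - X).submatrix (Equiv.sumCompl (· ∈ U)) (Equiv.sumCompl (· ∈ U))).toBlocks₁₁ 0
        ((1 - X).submatrix (Equiv.sumCompl (· ∈ U)) (Equiv.sumCompl (· ∈ U))).toBlocks₂₁
        ((1 - X).submatrix (Equiv.sumCompl (· ∈ U)) (Equiv.sumCompl (· ∈ U))).toBlocks₂₂ := by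
    conv_lhs => rw [← Matrix.fromBlocks_toBlocks ((1 - X).submatrix (Equiv.sumCompl (· ∈ U)) (Equiv.sumCompl (· ∈ U)))]
    rw [h12]
  have hA : ((1 - X).submatrix (Equiv.sumCompl (· ∈ U)) (Equiv.sumCompl (· ∈ U))).toBlocks₁₁.det = 0 := by
    rw [← Matrix.exists_mulVec_eq_zero_iff]
    obtain ⟨u, hu⟩ := hne
    refine ⟨fun _ => 1, ?_, ?_⟩
    · intro h
      have := congrFun h ⟨u, hu⟩
      norm_num at this
    · funext ⟨s, hs⟩
      simp only [Matrix.mulVec, dotProduct, Matrix.toBlocks₁₁, Matrix.of_apply,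
        Matrix.submatrix_apply, Equiv.sumCompl_apply_inl, mul_one, Pi.zero_apply]
      have key : ∑ s' ∈ Finset.univ.filter (· ∈ U), (1 - X) s s'
          = ∑ x : {a // a ∈ U}, (1 - X) s x.val :=
        Finset.sum_subtype _ (by simp) _
      rw [← key]
      have e1 : ∑ s' ∈ Finset.univ.filter (· ∈ U), (1 - X) s s'
          = (∑ s' ∈ Finset.univ.filter (· ∈ U), (1 : Matrix S S ℝ) s s')
            - ∑ s' ∈ Finset.univ.filter (· ∈ U), X s s' := by
        rw [← Finset.sum_sub_distrib]; rfl
      have e2 : ∑ s' ∈ Finset.univ.filter (· ∈ U), (1 : Matrix S S ℝ) s s' = 1 := by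
        rw [Finset.sum_eq_single s]
        · simp [Matrix.one_apply]
        · intro b _ hb; exact Matrix.one_apply_ne (Ne.symm hb)
        · intro h; simp [hs] at h
      rw [e1, e2, hU s hs]; ring
  rw [← hdet, hblock, Matrix.det_fromBlocks_zero₁₂, hA, zero_mul] at hunit
  exact (by norm_num : ¬ IsUnit (0:ℝ)) hunit

/-- If `X` is entrywise nonnegative, substochastic, and `1 - X` is invertible,
then `(1 - X)⁻¹` has nonnegative entries. -/
lemma inv_nonneg_of_substochastic [Nonempty S] (X : Matrix S S ℝ)
    (hX0 : ∀ s s', 0 ≤ X s s') (hX1 : ∀ s, ∑ s', X s s' ≤ 1)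
    (h : IsUnit (1 - X)) : ∀ s s', 0 ≤ (1 - X)⁻¹ s s' := by
  classical
  have hdet : IsUnit (1 - X).det := (Matrix.isUnit_iff_isUnit_det _).mp h
  -- Step 1: every state eventually leaks mass
  have hT : ∀ s, ∃ k, ∑ s', (X ^ k) s s' < 1 := by
    by_contra hcon
    push_neg at hcon
    obtain ⟨s₀, hs₀⟩ := hcon
    set U : Set S := {s | ∀ k, 1 ≤ ∑ s', (X ^ k) s s'} with hUdef
    have hs₀U : s₀ ∈ U := fun k => hs₀ k
    have hUrow : ∀ s ∈ U, ∑ s' ∈ Finset.univ.filter (· ∈ U), X s s' = 1 := by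
      intro s hs
      have hrow1 : ∑ s', X s s' = 1 := by
        have := hs 1
        simp only [pow_one] at this
        exact le_antisymm (hX1 s) this
      -- entries leading outside U vanish
      have hoff : ∀ s', s' ∉ U → X s s' = 0 := by
        intro s' hs'
        simp only [hUdef, Set.mem_setOf_eq, not_forall, not_le] at hs'
        obtain ⟨k, hk⟩ := hs'
        -- 1 ≤ rowsum (k+1) s = Σ_t X s t * rowsum k t ≤ Σ_t X s t = 1
        have hsk : 1 ≤ ∑ s'', (X ^ (1 + k)) s s'' := hs (1 + k)
        have hexp : ∑ s'', (X ^ (1 + k)) s s'' = ∑ t, (X ^ 1) s t * (∑ s'', (X ^ k) t s'') :=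
          rowsum_pow_mul X 1 k s
        simp only [pow_one] at hexp
        have hle : ∀ t ∈ Finset.univ, X s t * (∑ s'', (X ^ k) t s'') ≤ X s t := by
          intro t _
          have h1 := pow_rowsum_le X hX0 hX1 k t
          have h2 : (0:ℝ) ≤ ∑ s'', (X ^ k) t s'' :=
            Finset.sum_nonneg fun u _ => pow_entry_nonneg X hX0 k t u
          nlinarith [hX0 s t]
        have hsum_le : ∑ t, X s t * (∑ s'', (X ^ k) t s'') ≤ ∑ t, X s t :=
          Finset.sum_le_sum hle
        have heq : ∑ t, X s t * (∑ s'', (X ^ k) t s'') = ∑ t, X s t := by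
          rw [hrow1]; rw [hexp] at hsk; linarith [hsk, hsum_le, hrow1 ▸ hsum_le]
        -- zero difference with nonneg terms
        have hzero : ∑ t, (X s t - X s t * (∑ s'', (X ^ k) t s'')) = 0 := by
          rw [Finset.sum_sub_distrib, heq, sub_self]
        have hnn : ∀ t ∈ Finset.univ, 0 ≤ X s t - X s t * (∑ s'', (X ^ k) t s'') := by
          intro t _; linarith [hle t (Finset.mem_univ t)]
        have := (Finset.sum_eq_zero_iff_of_nonneg hnn).mp hzero s' (Finset.mem_univ s')
        have h2 : (0:ℝ) ≤ ∑ s'', (X ^ k) s' s'' :=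
          Finset.sum_nonneg fun u _ => pow_entry_nonneg X hX0 k s' u
        nlinarith [hX0 s s']
      rw [Finset.sum_filter]
      have : (∑ a, if a ∈ U then X s a else 0) = ∑ a, X s a := by
        apply Finset.sum_congr rfl
        intro s' _
        by_cases hs' : s' ∈ U
        · simp [hs']
        · simp [hs', hoff s' hs']
      rw [this, hrow1]
    exact closedClass_not_isUnit X hX0 hX1 U ⟨s₀, hs₀U⟩ hUrow h
  -- Step 2: uniform leak time K and factor θ < 1
  choose f hf using hT
  set K := Finset.univ.sup f with hK
  have hmono : ∀ (k j : ℕ) (s : S), ∑ s', (X ^ (k + j)) s s' ≤ ∑ s', (X ^ k) s s' := by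
    intro k j s
    rw [rowsum_pow_mul X k j s]
    apply Finset.sum_le_sum
    intro t _
    have h1 := pow_rowsum_le X hX0 hX1 j t
    have h2 : (0:ℝ) ≤ ∑ s', (X ^ j) t s' :=
      Finset.sum_nonneg fun u _ => pow_entry_nonneg X hX0 j t u
    nlinarith [pow_entry_nonneg X hX0 k s t]
  have hKrow : ∀ s, ∑ s', (X ^ K) s s' < 1 := by
    intro s
    have h1 : f s ≤ K := Finset.le_sup (Finset.mem_univ s)
    calc ∑ s', (X ^ K) s s' = ∑ s', (X ^ (f s + (K - f s))) s s' := by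
          rw [Nat.add_sub_cancel' h1]
      _ ≤ ∑ s', (X ^ (f s)) s s' := hmono (f s) (K - f s) s
      _ < 1 := hf s
  obtain ⟨θ, hθmem, hθmax⟩ :=
    Finset.exists_max_image Finset.univ (fun s => ∑ s', (X ^ K) s s') ⟨Classical.arbitrary S, Finset.mem_univ _⟩
  set θv : ℝ := ∑ s', (X ^ K) θ s' with hθv
  have hθlt : θv < 1 := hKrow θ
  have hθ0 : 0 ≤ θv := Finset.sum_nonneg fun u _ => pow_entry_nonneg X hX0 K θ u
  have hθbound : ∀ s, ∑ s', (X ^ K) s s' ≤ θv := fun s => hθmax s (Finset.mem_univ s)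
  -- Step 3: geometric decay of row sums: rowsum (K*j) ≤ θv^j
  have hgeo : ∀ j s, ∑ s', (X ^ (K * j)) s s' ≤ θv ^ j := by
    intro j
    induction j with
    | zero => intro s; simp [Matrix.one_apply]
    | succ j ih =>
      intro s
      have : K * (j + 1) = K + K * j := by ring
      rw [this, rowsum_pow_mul X K (K * j) s]
      calc ∑ t, (X ^ K) s t * (∑ s', (X ^ (K * j)) t s')
          ≤ ∑ t, (X ^ K) s t * θv ^ j := by
            apply Finset.sum_le_sum
            intro t _
            exact mul_le_mul_of_nonneg_left (ih t) (pow_entry_nonneg X hX0 K s t)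
        _ = (∑ t, (X ^ K) s t) * θv ^ j := by rw [← Finset.sum_mul]
        _ ≤ θv * θv ^ j := by
            have := hθbound s
            have h0 : (0:ℝ) ≤ θv ^ j := pow_nonneg hθ0 j
            nlinarith
        _ = θv ^ (j + 1) := by ring
  -- Step 4: Neumann-type identity and conclusion
  have hinv : (1 - X)⁻¹ * (1 - X) = 1 := Matrix.nonsing_inv_mul _ hdet
  have hident : ∀ N : ℕ, (1 - X)⁻¹ = (∑ i ∈ Finset.range N, X ^ i) + (1 - X)⁻¹ * X ^ N := by
    intro N
    have h2 : (1 - X) * (∑ i ∈ Finset.range N, X ^ i) = 1 - X ^ N := by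
      have := mul_geom_sum X N
      have hneg : (1 - X) * (∑ i ∈ Finset.range N, X ^ i)
          = -((X - 1) * ∑ i ∈ Finset.range N, X ^ i) := by
        rw [← neg_mul, neg_sub]
      rw [hneg, this, neg_sub]
    calc (1 - X)⁻¹ = (1 - X)⁻¹ * 1 := by rw [mul_one]
      _ = (1 - X)⁻¹ * ((1 - X) * (∑ i ∈ Finset.range N, X ^ i) + X ^ N) := by
          rw [h2, sub_add_cancel]
      _ = ((1 - X)⁻¹ * (1 - X)) * (∑ i ∈ Finset.range N, X ^ i) + (1 - X)⁻¹ * X ^ N := by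
          rw [mul_add, mul_assoc]
      _ = (∑ i ∈ Finset.range N, X ^ i) + (1 - X)⁻¹ * X ^ N := by rw [hinv, one_mul]
  -- entrywise conclusion
  intro s s'
  by_contra hneg
  push_neg at hneg
  set R := (1 - X)⁻¹ with hR
  set Cs : ℝ := ∑ t, |R s t| with hCs
  have hCs0 : 0 ≤ Cs := Finset.sum_nonneg fun t _ => abs_nonneg _
  have hbound : ∀ j : ℕ, -(Cs * θv ^ j) ≤ R s s' := by
    intro j
    have hid := hident (K * j)
    have hRentry : R s s' = (∑ i ∈ Finset.range (K * j), X ^ i) s s' + (R * X ^ (K * j)) s s' := by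
      conv_lhs => rw [hid]
      simp [Matrix.add_apply]
    have hsum_nn : 0 ≤ (∑ i ∈ Finset.range (K * j), X ^ i) s s' := by
      rw [Matrix.sum_apply]
      exact Finset.sum_nonneg fun i _ => pow_entry_nonneg X hX0 i s s'
    have hRX : -(Cs * θv ^ j) ≤ (R * X ^ (K * j)) s s' := by
      rw [Matrix.mul_apply]
      have hterm : ∀ t ∈ Finset.univ, -(|R s t| * θv ^ j) ≤ R s t * (X ^ (K * j)) t s' := by
        intro t _
        have hXe : (X ^ (K * j)) t s' ≤ θv ^ j := by
          calc (X ^ (K * j)) t s' ≤ ∑ u, (X ^ (K * j)) t u :=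
                Finset.single_le_sum (fun u _ => pow_entry_nonneg X hX0 _ t u) (Finset.mem_univ s')
            _ ≤ θv ^ j := hgeo j t
        have hXe0 : 0 ≤ (X ^ (K * j)) t s' := pow_entry_nonneg X hX0 _ t s'
        have := abs_nonneg (R s t)
        have h1 : -(|R s t|) ≤ R s t := neg_abs_le _
        nlinarith
      calc -(Cs * θv ^ j) = ∑ t, -(|R s t| * θv ^ j) := by
            rw [hCs, Finset.sum_mul, ← Finset.sum_neg_distrib]
        _ ≤ ∑ t, R s t * (X ^ (K * j)) t s' := Finset.sum_le_sum hterm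
    linarith [hRentry, hsum_nn, hRX]
  -- choose j with Cs * θv ^ j < -R s s'
  obtain ⟨j, hj⟩ := exists_pow_lt_of_lt_one
    (show (0:ℝ) < (-R s s') / (Cs + 1) from div_pos (by linarith) (by linarith)) hθlt
  have hθvj : 0 ≤ θv ^ j := pow_nonneg hθ0 j
  have : Cs * θv ^ j < -R s s' := by
    have h1 : θv ^ j * (Cs + 1) < -R s s' := by
      rw [lt_div_iff₀ (by positivity : (0:ℝ) < Cs + 1)] at hj
      linarith
    nlinarith
  linarith [hbound j]

/-- A strictly negative quadratic form on nonzero vectors is uniformly negative definite. -/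
lemma exists_c_of_negdef (n : ℕ) (hn : 1 ≤ n) (C : Matrix (Fin n) (Fin n) ℝ)
    (h : ∀ y : Fin n → ℝ, y ≠ 0 → y ⬝ᵥ C.mulVec y < 0) :
    ∃ c : ℝ, 0 < c ∧ ∀ y : Fin n → ℝ, y ⬝ᵥ C.mulVec y ≤ -c * (y ⬝ᵥ y) := by
  classical
  have hcontg : Continuous fun y : Fin n → ℝ => y ⬝ᵥ C.mulVec y := by
    show Continuous fun y : Fin n → ℝ => ∑ i, y i * ∑ j, C i j * y j
    exact continuous_finset_sum _ fun i _ => (continuous_apply i).mul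
      (continuous_finset_sum _ fun j _ => continuous_const.mul (continuous_apply j))
  have hcont2 : Continuous fun y : Fin n → ℝ => y ⬝ᵥ y := by
    show Continuous fun y : Fin n → ℝ => ∑ i, y i * y i
    exact continuous_finset_sum _ fun i _ => (continuous_apply i).mul (continuous_apply i)
  set K : Set (Fin n → ℝ) := {y | y ⬝ᵥ y = 1} with hKdef
  have hclosed : IsClosed K := isClosed_eq hcont2 continuous_const
  have hbdd : Bornology.IsBounded K := by
    apply (Metric.isBounded_closedBall (x := (0 : Fin n → ℝ)) (r := 1)).subset
    intro y hy
    rw [Metric.mem_closedBall, dist_zero_right]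
    rw [pi_norm_le_iff_of_nonneg zero_le_one]
    intro i
    have h1 : y i * y i ≤ y ⬝ᵥ y :=
      Finset.single_le_sum (fun j (_ : j ∈ Finset.univ) => mul_self_nonneg (y j)) (Finset.mem_univ i)
    rw [hKdef] at hy
    have : y i * y i ≤ 1 := by rw [Set.mem_setOf_eq] at hy; linarith [hy ▸ h1]
    rw [Real.norm_eq_abs]
    exact abs_le_one_iff_mul_self_le_one.mpr this
  have hcompact : IsCompact K := Metric.isCompact_of_isClosed_isBounded hclosed hbdd
  have i₀ : Fin n := ⟨0, hn⟩
  set y₀ : Fin n → ℝ := fun i => if i = i₀ then 1 else 0 with hy₀def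
  have hy₀ : y₀ ∈ K := by
    rw [hKdef, Set.mem_setOf_eq]
    show ∑ i, y₀ i * y₀ i = 1
    rw [Finset.sum_eq_single i₀]
    · simp [hy₀def]
    · intro b _ hb; simp [hy₀def, hb]
    · intro hv; exact absurd (Finset.mem_univ i₀) hv
  obtain ⟨ym, hymK, hmin⟩ := hcompact.exists_isMinOn ⟨y₀, hy₀⟩
    ((hcontg.neg).continuousOn)
  set c : ℝ := -(ym ⬝ᵥ C.mulVec ym) with hc
  have hym_ne : ym ≠ 0 := by
    intro h0
    rw [hKdef, Set.mem_setOf_eq, h0] at hymK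
    simp [dotProduct] at hymK
  have hcpos : 0 < c := by
    have := h ym hym_ne
    rw [hc]; linarith
  refine ⟨c, hcpos, ?_⟩
  intro y
  by_cases hy : y = 0
  · subst hy; simp [dotProduct, Matrix.mulVec_zero]
  · have hipos : 0 < y ⬝ᵥ y := by
      obtain ⟨i, hi⟩ := Function.ne_iff.mp hy
      have h1 : y i * y i ≤ y ⬝ᵥ y :=
        Finset.single_le_sum (fun j (_ : j ∈ Finset.univ) => mul_self_nonneg (y j)) (Finset.mem_univ i)
      have : 0 < y i * y i := mul_self_pos.mpr hi
      linarith
    set t : ℝ := Real.sqrt (y ⬝ᵥ y) with ht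
    have htpos : 0 < t := Real.sqrt_pos.mpr hipos
    have ht2 : t * t = y ⬝ᵥ y := Real.mul_self_sqrt hipos.le
    set u : Fin n → ℝ := t⁻¹ • y with hu
    have huK : u ∈ K := by
      rw [hKdef, Set.mem_setOf_eq, hu, smul_dotProduct, dotProduct_smul]
      rw [smul_eq_mul, smul_eq_mul, ← ht2]
      have htne : t ≠ 0 := htpos.ne'
      field_simp
    have hval : u ⬝ᵥ C.mulVec u = t⁻¹ * (t⁻¹ * (y ⬝ᵥ C.mulVec y)) := by
      rw [hu, Matrix.mulVec_smul, smul_dotProduct, dotProduct_smul]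
      simp [smul_eq_mul]
    have hmin' : -(y ⬝ᵥ C.mulVec y) ≥ c * (t * t) := by
      have h1 : -(ym ⬝ᵥ C.mulVec ym) ≤ -(u ⬝ᵥ C.mulVec u) := hmin huK
      rw [hval] at h1
      have h2 : c ≤ -(t⁻¹ * (t⁻¹ * (y ⬝ᵥ C.mulVec y))) := by rw [hc]; exact h1
      have h4 : c * (t * t) ≤ (-(t⁻¹ * (t⁻¹ * (y ⬝ᵥ C.mulVec y)))) * (t * t) :=
        mul_le_mul_of_nonneg_right h2 (by positivity)
      have h5 : (-(t⁻¹ * (t⁻¹ * (y ⬝ᵥ C.mulVec y)))) * (t * t) = -(y ⬝ᵥ C.mulVec y) := by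
        field_simp
      rw [h5] at h4; exact h4
    rw [← ht2]; linarith

end helpers

/-- With `J₀ = {s : M̄_ss = 0}` and `E` the column space of `Φ`,
condition (★) (any `v ∈ E` vanishing outside `J₀` is zero) implies that `C` is
negative definite; moreover `C` is nonsingular iff (★) holds. -/
theorem stmt16 {S : Type} [Fintype S] [Nonempty S] [DecidableEq S] (n : ℕ) (hn : 1 ≤ n)
    (P : Matrix S S ℝ) (hP0 : ∀ s s', 0 ≤ P s s') (hP1 : ∀ s, ∑ s', P s s' = 1)
    (γf lamf : S → ℝ)
    (hγ : ∀ s, γf s ∈ Set.Icc (0 : ℝ) 1) (hlam : ∀ s, lamf s ∈ Set.Icc (0 : ℝ) 1)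
    (h1 : IsUnit (1 - P * Matrix.diagonal γf))
    (h2 : IsUnit (1 - P * Matrix.diagonal γf * Matrix.diagonal lamf))
    (d ifun : S → ℝ) (hd : ∀ s, 0 < d s) (hi : ∀ s, 0 ≤ ifun s)
    (Φ : Matrix S (Fin n) ℝ)
    (hΦ : LinearIndependent ℝ fun j : Fin n => fun s : S => Φ s j) :
    ((∀ x : Fin n → ℝ,
        (∀ s, MdiagOf P γf lamf d ifun s ≠ 0 → Φ.mulVec x s = 0) → Φ.mulVec x = 0) →
      ∃ c : ℝ, 0 < c ∧
        ∀ y : Fin n → ℝ, y ⬝ᵥ (Cof P γf lamf d ifun Φ).mulVec y ≤ -c * (y ⬝ᵥ y)) ∧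
    (IsUnit (Cof P γf lamf d ifun Φ) ↔
      ∀ x : Fin n → ℝ,
        (∀ s, MdiagOf P γf lamf d ifun s ≠ 0 → Φ.mulVec x s = 0) → Φ.mulVec x = 0) := by
  classical
  set Γm := Matrix.diagonal γf with hΓm
  set Λm := Matrix.diagonal lamf with hΛm
  have h1det : IsUnit (1 - P * Γm).det := (Matrix.isUnit_iff_isUnit_det _).mp h1
  have h2det : IsUnit (1 - P * Γm * Λm).det := (Matrix.isUnit_iff_isUnit_det _).mp h2
  -- entries of P Γ Λ and P Γ
  have hPΓ : ∀ s s', (P * Γm) s s' = P s s' * γf s' := by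
    intro s s'; rw [hΓm, Matrix.mul_diagonal]
  have hPΓΛ : ∀ s s', (P * Γm * Λm) s s' = P s s' * γf s' * lamf s' := by
    intro s s'; rw [hΛm, Matrix.mul_diagonal, hPΓ]
  -- X := P Γ Λ is substochastic
  have hX0 : ∀ s s', 0 ≤ (P * Γm * Λm) s s' := by
    intro s s'; rw [hPΓΛ]
    exact mul_nonneg (mul_nonneg (hP0 s s') (hγ s').1) (hlam s').1
  have hX1 : ∀ s, ∑ s', (P * Γm * Λm) s s' ≤ 1 := by
    intro s
    calc ∑ s', (P * Γm * Λm) s s' ≤ ∑ s', P s s' := by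
          apply Finset.sum_le_sum
          intro s' _
          rw [hPΓΛ]
          have h1' := (hγ s').1; have h2' := (hγ s').2
          have h3' := (hlam s').1; have h4' := (hlam s').2
          have e1 : P s s' * γf s' * lamf s' ≤ P s s' * γf s' :=
            mul_le_of_le_one_right (mul_nonneg (hP0 s s') h1') h4'
          have e2 : P s s' * γf s' ≤ P s s' := mul_le_of_le_one_right (hP0 s s') h2'
          linarith
      _ = 1 := hP1 s
  have hBinv : ∀ s s', 0 ≤ (1 - P * Γm * Λm)⁻¹ s s' :=
    inv_nonneg_of_substochastic _ hX0 hX1 h2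
  set Q := Qof P γf lamf with hQdef
  -- Q = B⁻¹ (PΓ - PΓΛ)
  have hBB : (1 - P * Γm * Λm)⁻¹ * (1 - P * Γm * Λm) = 1 := Matrix.nonsing_inv_mul _ h2det
  have hQeq : Q = (1 - P * Γm * Λm)⁻¹ * (P * Γm - P * Γm * Λm) := by
    rw [hQdef]
    unfold Qof
    rw [← hΓm, ← hΛm]
    rw [show (1 : Matrix S S ℝ) - P * Γm = (1 - P * Γm * Λm) - (P * Γm - P * Γm * Λm) from by abel]
    rw [mul_sub, hBB]
    rw [sub_sub_cancel]
  have hQ0 : ∀ s s', 0 ≤ Q s s' := by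
    intro s s'
    rw [hQeq, Matrix.mul_apply]
    apply Finset.sum_nonneg
    intro t _
    apply mul_nonneg (hBinv s t)
    rw [Matrix.sub_apply, hPΓ, hPΓΛ]
    have h1' := (hγ s').1
    have h4' := (hlam s').2
    have e1 : P t s' * γf s' * lamf s' ≤ P t s' * γf s' :=
      mul_le_of_le_one_right (mul_nonneg (hP0 t s') h1') h4'
    linarith
  -- 1 - Q = B⁻¹ A
  have h1mQ_eq : 1 - Q = (1 - P * Γm * Λm)⁻¹ * (1 - P * Γm) := by
    rw [hQdef]; unfold Qof; rw [← hΓm, ← hΛm, sub_sub_cancel]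
  have h1mQ : IsUnit (1 - Q) := by
    rw [h1mQ_eq, Matrix.isUnit_iff_isUnit_det, Matrix.det_mul]
    apply IsUnit.mul _ h1det
    rw [Matrix.det_nonsing_inv]
    exact IsUnit.of_mul_eq_one _ (Ring.inverse_mul_cancel _ h2det)
  have h1mQdet : IsUnit (1 - Q).det := (Matrix.isUnit_iff_isUnit_det _).mp h1mQ
  -- row sums of Q at most 1
  have hQ1 : ∀ s, ∑ s', Q s s' ≤ 1 := by
    intro s
    have hA1 : ∀ t, 0 ≤ ∑ s', (1 - P * Γm) t s' := by
      intro t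
      have : ∑ s', (1 - P * Γm) t s' = (∑ s', (1 : Matrix S S ℝ) t s') - ∑ s', (P * Γm) t s' := by
        rw [← Finset.sum_sub_distrib]; rfl
      rw [this]
      have hone : ∑ s', (1 : Matrix S S ℝ) t s' = 1 := by
        rw [Finset.sum_eq_single t]
        · exact Matrix.one_apply_eq t
        · intro b _ hb; exact Matrix.one_apply_ne (Ne.symm hb)
        · intro hv; exact absurd (Finset.mem_univ t) hv
      rw [hone]
      have : ∑ s', (P * Γm) t s' ≤ ∑ s', P t s' := by
        apply Finset.sum_le_sum
        intro s' _
        rw [hPΓ]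
        exact mul_le_of_le_one_right (hP0 t s') (hγ s').2
      rw [← hP1 t] at *
      linarith
    have hQrow : ∑ s', Q s s' = 1 - ∑ s', ((1 - P * Γm * Λm)⁻¹ * (1 - P * Γm)) s s' := by
      have : ∀ s', Q s s' = (1 : Matrix S S ℝ) s s' - ((1 - P * Γm * Λm)⁻¹ * (1 - P * Γm)) s s' := by
        intro s'
        have := congrFun (congrFun h1mQ_eq s) s'
        rw [Matrix.sub_apply] at this
        linarith
      rw [Finset.sum_congr rfl fun s' _ => this s', Finset.sum_sub_distrib]
      have hone : ∑ s', (1 : Matrix S S ℝ) s s' = 1 := by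
        rw [Finset.sum_eq_single s]
        · exact Matrix.one_apply_eq s
        · intro b _ hb; exact Matrix.one_apply_ne (Ne.symm hb)
        · intro hv; exact absurd (Finset.mem_univ s) hv
      rw [hone]
    rw [hQrow]
    have : 0 ≤ ∑ s', ((1 - P * Γm * Λm)⁻¹ * (1 - P * Γm)) s s' := by
      have hexp : ∑ s', ((1 - P * Γm * Λm)⁻¹ * (1 - P * Γm)) s s'
          = ∑ t, (1 - P * Γm * Λm)⁻¹ s t * (∑ s', (1 - P * Γm) t s') := by
        simp only [Matrix.mul_apply]
        rw [Finset.sum_comm]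
        exact Finset.sum_congr rfl fun t _ => (Finset.mul_sum _ _ _).symm
      rw [hexp]
      exact Finset.sum_nonneg fun t _ => mul_nonneg (hBinv s t) (hA1 t)
    linarith
  -- inverse of (1 - Q) is nonnegative
  have hQinv : ∀ s s', 0 ≤ (1 - Q)⁻¹ s s' := inv_nonneg_of_substochastic Q hQ0 hQ1 h1mQ
  set m : S → ℝ := MdiagOf P γf lamf d ifun with hmdef
  have hmexp : m = (fun s => d s * ifun s) ᵥ* (1 - Q)⁻¹ := by
    rw [hmdef]; unfold MdiagOf; rw [← hQdef]
  have hm0 : ∀ s, 0 ≤ m s := by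
    intro s
    rw [hmexp]
    exact Finset.sum_nonneg fun t _ =>
      mul_nonneg (mul_nonneg (hd t).le (hi t)) (hQinv t s)
  have hvm : m ᵥ* (1 - Q) = fun s => d s * ifun s := by
    rw [hmexp, Matrix.vecMul_vecMul, Matrix.nonsing_inv_mul _ h1mQdet, Matrix.vecMul_one]
  have hmQ : ∀ s', ∑ s, m s * Q s s' = m s' - d s' * ifun s' := by
    intro s'
    have h := congrFun hvm s'
    simp only [Matrix.vecMul, dotProduct, Matrix.sub_apply, Matrix.one_apply] at h
    have hsplit : ∑ s, m s * ((if s = s' then (1:ℝ) else 0) - Q s s')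
        = (∑ s, m s * (if s = s' then (1:ℝ) else 0)) - ∑ s, m s * Q s s' := by
      rw [← Finset.sum_sub_distrib]
      apply Finset.sum_congr rfl
      intro s _; ring
    rw [hsplit] at h
    have hite : ∑ s, m s * (if s = s' then (1:ℝ) else 0) = m s' := by
      rw [Finset.sum_eq_single s']
      · simp
      · intro b _ hb; simp [hb]
      · intro hv; exact absurd (Finset.mem_univ s') hv
    rw [hite] at h
    linarith
  -- the quadratic form matrix
  set W : Matrix S S ℝ := Matrix.diagonal m * (1 - Q) with hWdef
  have hWe : ∀ s s', W s s' = m s * ((if s = s' then (1:ℝ) else 0) - Q s s') := by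
    intro s s'
    rw [hWdef, Matrix.diagonal_mul, Matrix.sub_apply, Matrix.one_apply]
  have hW : ∀ z : S → ℝ, z ⬝ᵥ W.mulVec z
      = (∑ s, m s * z s ^ 2) - ∑ s, ∑ s', m s * Q s s' * (z s * z s') := by
    intro z
    show ∑ s, z s * (∑ s', W s s' * z s') = _
    have step1 : ∀ s, z s * (∑ s', W s s' * z s')
        = (∑ s', m s * (if s = s' then (1:ℝ) else 0) * (z s * z s'))
          - ∑ s', m s * Q s s' * (z s * z s') := by
      intro s
      rw [Finset.mul_sum, ← Finset.sum_sub_distrib]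
      apply Finset.sum_congr rfl
      intro s' _
      rw [hWe]
      ring
    rw [Finset.sum_congr rfl fun s _ => step1 s, Finset.sum_sub_distrib]
    congr 1
    apply Finset.sum_congr rfl
    intro s _
    rw [Finset.sum_eq_single s]
    · rw [if_pos rfl]; ring
    · intro b _ hb; rw [if_neg (fun h => hb h.symm)]; ring
    · intro hv; exact absurd (Finset.mem_univ s) hv
  -- the key algebraic identity
  have hkey : ∀ z : S → ℝ, 2 * (z ⬝ᵥ W.mulVec z)
      = (∑ s, m s * (1 - ∑ s', Q s s') * z s ^ 2)
        + (∑ s, (d s * ifun s) * z s ^ 2)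
        + ∑ s, ∑ s', m s * Q s s' * (z s - z s') ^ 2 := by
    intro z
    have e3 : ∀ s, ∑ s', m s * Q s s' * (z s - z s') ^ 2
        = m s * (∑ s', Q s s') * z s ^ 2
          - 2 * (∑ s', m s * Q s s' * (z s * z s'))
          + ∑ s', m s * Q s s' * z s' ^ 2 := by
      intro s
      have h1 : ∑ s', m s * Q s s' * (z s - z s') ^ 2
          = (∑ s', m s * Q s s' * z s ^ 2) - (∑ s', 2 * (m s * Q s s' * (z s * z s')))
            + ∑ s', m s * Q s s' * z s' ^ 2 := by
        rw [show (∑ s', m s * Q s s' * z s ^ 2) - (∑ s', 2 * (m s * Q s s' * (z s * z s')))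
              + (∑ s', m s * Q s s' * z s' ^ 2)
            = ∑ s', (m s * Q s s' * z s ^ 2 - 2 * (m s * Q s s' * (z s * z s'))
              + m s * Q s s' * z s' ^ 2) from by
          rw [Finset.sum_add_distrib, Finset.sum_sub_distrib]]
        exact Finset.sum_congr rfl fun s' _ => by ring
      have h2 : ∑ s', m s * Q s s' * z s ^ 2 = m s * (∑ s', Q s s') * z s ^ 2 := by
        have hterm : ∀ s' : S, m s * Q s s' * z s ^ 2 = (m s * z s ^ 2) * Q s s' :=
          fun s' => by ring
        rw [Finset.sum_congr rfl fun s' _ => hterm s', ← Finset.mul_sum]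
        ring
      have h3 : ∑ s', 2 * (m s * Q s s' * (z s * z s'))
          = 2 * ∑ s', m s * Q s s' * (z s * z s') := (Finset.mul_sum _ _ _).symm
      rw [h1, h2, h3]
    have e2 : ∑ s, ∑ s', m s * Q s s' * z s' ^ 2
        = ∑ s', (m s' - d s' * ifun s') * z s' ^ 2 := by
      rw [Finset.sum_comm]
      apply Finset.sum_congr rfl
      intro s' _
      rw [← Finset.sum_mul, hmQ s']
    have e3sum : ∑ s, ∑ s', m s * Q s s' * (z s - z s') ^ 2
        = (∑ s, m s * (∑ s', Q s s') * z s ^ 2)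
          - 2 * (∑ s, ∑ s', m s * Q s s' * (z s * z s'))
          + ∑ s', (m s' - d s' * ifun s') * z s' ^ 2 := by
      rw [Finset.sum_congr rfl fun s _ => e3 s]
      rw [Finset.sum_add_distrib, Finset.sum_sub_distrib, e2]
      congr 1
      congr 1
      exact (Finset.mul_sum _ _ _).symm
    have ecomb : (∑ s, m s * (1 - ∑ s', Q s s') * z s ^ 2) + (∑ s, (d s * ifun s) * z s ^ 2)
        + (∑ s, m s * (∑ s', Q s s') * z s ^ 2) + (∑ s, (m s - d s * ifun s) * z s ^ 2)
        = 2 * ∑ s, m s * z s ^ 2 := by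
      rw [Finset.mul_sum, ← Finset.sum_add_distrib, ← Finset.sum_add_distrib,
        ← Finset.sum_add_distrib]
      exact Finset.sum_congr rfl fun s _ => by ring
    rw [hW z, e3sum]
    linarith [ecomb]
  -- nonnegativity of the three groups
  have hg1 : ∀ z : S → ℝ, ∀ s, 0 ≤ m s * (1 - ∑ s', Q s s') * z s ^ 2 := by
    intro z s
    apply mul_nonneg (mul_nonneg (hm0 s) _) (sq_nonneg _)
    linarith [hQ1 s]
  have hg2 : ∀ z : S → ℝ, ∀ s, 0 ≤ (d s * ifun s) * z s ^ 2 :=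
    fun z s => mul_nonneg (mul_nonneg (hd s).le (hi s)) (sq_nonneg _)
  have hg3 : ∀ z : S → ℝ, ∀ s s', 0 ≤ m s * Q s s' * (z s - z s') ^ 2 :=
    fun z s s' => mul_nonneg (mul_nonneg (hm0 s) (hQ0 s s')) (sq_nonneg _)
  have hFnn : ∀ z : S → ℝ, 0 ≤ z ⬝ᵥ W.mulVec z := by
    intro z
    have := hkey z
    have t1 : 0 ≤ ∑ s, m s * (1 - ∑ s', Q s s') * z s ^ 2 :=
      Finset.sum_nonneg fun s _ => hg1 z s
    have t2 : 0 ≤ ∑ s, (d s * ifun s) * z s ^ 2 :=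
      Finset.sum_nonneg fun s _ => hg2 z s
    have t3 : 0 ≤ ∑ s, ∑ s', m s * Q s s' * (z s - z s') ^ 2 :=
      Finset.sum_nonneg fun s _ => Finset.sum_nonneg fun s' _ => hg3 z s s'
    linarith
  -- vanishing of the form forces vanishing on the support of m
  have hFzero : ∀ z : S → ℝ, z ⬝ᵥ W.mulVec z = 0 → ∀ s, m s ≠ 0 → z s = 0 := by
    intro z hz
    have hk := hkey z
    rw [hz, mul_zero] at hk
    have t1 : 0 ≤ ∑ s, m s * (1 - ∑ s', Q s s') * z s ^ 2 :=
      Finset.sum_nonneg fun s _ => hg1 z s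
    have t2 : 0 ≤ ∑ s, (d s * ifun s) * z s ^ 2 :=
      Finset.sum_nonneg fun s _ => hg2 z s
    have t3 : 0 ≤ ∑ s, ∑ s', m s * Q s s' * (z s - z s') ^ 2 :=
      Finset.sum_nonneg fun s _ => Finset.sum_nonneg fun s' _ => hg3 z s s'
    have z1 : ∑ s, m s * (1 - ∑ s', Q s s') * z s ^ 2 = 0 := by linarith
    have z3 : ∑ s, ∑ s', m s * Q s s' * (z s - z s') ^ 2 = 0 := by linarith
    have h01 : ∀ s, m s * (1 - ∑ s', Q s s') * z s ^ 2 = 0 := by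
      intro s
      exact (Finset.sum_eq_zero_iff_of_nonneg fun s _ => hg1 z s).mp z1 s (Finset.mem_univ s)
    have h03 : ∀ s s', m s * Q s s' * (z s - z s') ^ 2 = 0 := by
      intro s s'
      have hrow : ∑ s', m s * Q s s' * (z s - z s') ^ 2 = 0 :=
        (Finset.sum_eq_zero_iff_of_nonneg fun u _ =>
          Finset.sum_nonneg fun u' _ => hg3 z u u').mp z3 s (Finset.mem_univ s)
      exact (Finset.sum_eq_zero_iff_of_nonneg fun u _ => hg3 z s u).mp hrow s' (Finset.mem_univ s')
    -- the set of bad states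
    by_contra hcon
    push_neg at hcon
    obtain ⟨s₁, hms₁, hzs₁⟩ := hcon
    set U : Set S := {s | m s ≠ 0 ∧ z s ≠ 0} with hUdef
    have hne : U.Nonempty := ⟨s₁, hms₁, hzs₁⟩
    have hUrow : ∀ s ∈ U, ∑ s' ∈ Finset.univ.filter (· ∈ U), Q s s' = 1 := by
      intro s hs
      obtain ⟨hms, hzs⟩ := hs
      have hmspos : 0 < m s := lt_of_le_of_ne (hm0 s) (Ne.symm hms)
      have hzsq : 0 < z s ^ 2 := by positivity
      have hrs : ∑ s', Q s s' = 1 := by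
        have := h01 s
        rcases mul_eq_zero.mp this with h | h
        · rcases mul_eq_zero.mp h with h' | h'
          · exact absurd h' hms
          · linarith
        · nlinarith
      have hoffU : ∀ s', s' ∉ U → Q s s' = 0 := by
        intro s' hs'
        by_contra hQpos
        have hQpos' : 0 < Q s s' := lt_of_le_of_ne (hQ0 s s') (Ne.symm hQpos)
        -- from h03, z s' = z s ≠ 0
        have hzz : z s' = z s := by
          have := h03 s s'
          rcases mul_eq_zero.mp this with h | h
          · rcases mul_eq_zero.mp h with h' | h'
            · exact absurd h' hms
            · exact absurd h' (ne_of_gt hQpos')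
          · have := sq_eq_zero_iff.mp h
            linarith
        have hzs' : z s' ≠ 0 := by rw [hzz]; exact hzs
        -- then m s' > 0
        have hms' : 0 < m s' := by
          have hsum : m s * Q s s' ≤ ∑ t, m t * Q t s' :=
            Finset.single_le_sum (fun t _ => mul_nonneg (hm0 t) (hQ0 t s'))
              (Finset.mem_univ s)
          rw [hmQ s'] at hsum
          have := mul_nonneg (hd s').le (hi s')
          nlinarith
        exact hs' ⟨ne_of_gt hms', hzs'⟩
      rw [Finset.sum_filter]
      have : (∑ s', if s' ∈ U then Q s s' else 0) = ∑ s', Q s s' := by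
        apply Finset.sum_congr rfl
        intro s' _
        by_cases hs' : s' ∈ U
        · simp [hs']
        · simp [hs', hoffU s' hs']
      rw [this, hrs]
    exact closedClass_not_isUnit Q hQ0 hQ1 U hne hUrow h1mQ
  -- quadratic form of C
  set CC : Matrix (Fin n) (Fin n) ℝ := Cof P γf lamf d ifun Φ with hCCdef
  have hCeq : CC = -(Φ.transpose * (W * Φ)) := by
    rw [hCCdef]
    unfold Cof
    rw [← hQdef, ← hmdef, hWdef]
    simp only [Matrix.mul_assoc]
  have hCform : ∀ y : Fin n → ℝ,
      y ⬝ᵥ CC.mulVec y = -(Φ.mulVec y ⬝ᵥ W.mulVec (Φ.mulVec y)) := by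
    intro y
    rw [hCeq, Matrix.neg_mulVec, dotProduct_neg]
    congr 1
    rw [← Matrix.mulVec_mulVec, Matrix.dotProduct_mulVec, Matrix.vecMul_transpose,
      Matrix.mulVec_mulVec]
  have hCx : ∀ x : Fin n → ℝ, CC.mulVec x = -(Φ.transpose.mulVec (W.mulVec (Φ.mulVec x))) := by
    intro x
    rw [hCeq, Matrix.neg_mulVec, ← Matrix.mulVec_mulVec, ← Matrix.mulVec_mulVec]
  -- injectivity from linear independence
  have hinj : ∀ y : Fin n → ℝ, Φ.mulVec y = 0 → y = 0 := by
    intro y hy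
    have hli := Fintype.linearIndependent_iff.mp hΦ y
    have hzero : ∑ j, y j • (fun s : S => Φ s j) = 0 := by
      funext s
      rw [Finset.sum_apply]
      simp only [Pi.smul_apply, smul_eq_mul, Pi.zero_apply]
      have := congrFun hy s
      simp only [Matrix.mulVec, dotProduct, Pi.zero_apply] at this
      rw [← this]
      exact Finset.sum_congr rfl fun j _ => by ring
    funext j
    exact hli hzero j
  -- negative definiteness under the condition
  have hpart1 : (∀ x : Fin n → ℝ,
      (∀ s, m s ≠ 0 → Φ.mulVec x s = 0) → Φ.mulVec x = 0) →
      ∃ c : ℝ, 0 < c ∧ ∀ y : Fin n → ℝ, y ⬝ᵥ CC.mulVec y ≤ -c * (y ⬝ᵥ y) := by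
    intro hstar
    apply exists_c_of_negdef n hn CC
    intro y hy
    rw [hCform y]
    have hnn := hFnn (Φ.mulVec y)
    rcases lt_or_eq_of_le hnn with h | h
    · linarith
    · exfalso
      have hvan := hFzero (Φ.mulVec y) h.symm
      have := hinj y (hstar y hvan)
      exact hy this
  constructor
  · exact hpart1
  constructor
  · -- unit → condition
    intro hunit x hx
    by_contra hΦx
    -- C x = 0 with x ≠ 0
    have hcol : ∀ s', m s' = 0 → ∀ s, m s * Q s s' = 0 := by
      intro s' hms' s
      have hsum : ∑ t, m t * Q t s' = m s' - d s' * ifun s' := hmQ s'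
      rw [hms', zero_sub] at hsum
      have hsumnn : 0 ≤ ∑ t, m t * Q t s' :=
        Finset.sum_nonneg fun t _ => mul_nonneg (hm0 t) (hQ0 t s')
      have hdin : 0 ≤ d s' * ifun s' := mul_nonneg (hd s').le (hi s')
      have hzero : ∑ t, m t * Q t s' = 0 := le_antisymm (by linarith) hsumnn
      exact (Finset.sum_eq_zero_iff_of_nonneg fun t _ =>
        mul_nonneg (hm0 t) (hQ0 t s')).mp hzero s (Finset.mem_univ s)
    set z : S → ℝ := Φ.mulVec x with hzdef
    have hWz : W.mulVec z = 0 := by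
      funext s
      simp only [Matrix.mulVec, dotProduct, Pi.zero_apply]
      apply Finset.sum_eq_zero
      intro s' _
      by_cases hzs' : z s' = 0
      · rw [hzs', mul_zero]
      · have hms' : m s' = 0 := by
          by_contra hms'
          exact hzs' (hx s' hms')
        rw [hWe s s']
        by_cases hss : s = s'
        · subst hss
          rw [hms', zero_mul, zero_mul]
        · simp only [hss, if_false, zero_sub]
          have := hcol s' hms' s
          have : m s * Q s s' = 0 := this
          rw [show m s * (-Q s s') = -(m s * Q s s') from by ring, this]
          ring
    have hCx0 : CC.mulVec x = 0 := by
      rw [hCx x, hWz, Matrix.mulVec_zero, neg_zero]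
    have hx0 : x ≠ 0 := by
      intro h0
      apply hΦx
      rw [hzdef, h0, Matrix.mulVec_zero]
    have hdet0 : CC.det = 0 :=
      Matrix.exists_mulVec_eq_zero_iff.mp ⟨x, hx0, hCx0⟩
    rw [Matrix.isUnit_iff_isUnit_det, hdet0] at hunit
    exact (by norm_num : ¬ IsUnit (0:ℝ)) hunit
  · -- condition → unit
    intro hstar
    obtain ⟨c, hc, hbound⟩ := hpart1 hstar
    rw [Matrix.isUnit_iff_isUnit_det]
    rw [isUnit_iff_ne_zero]
    intro hdet0
    obtain ⟨v, hv0, hCv⟩ := Matrix.exists_mulVec_eq_zero_iff.mpr hdet0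
    have h1' := hbound v
    rw [hCv] at h1'
    simp only [dotProduct_zero] at h1'
    have hvv : 0 < v ⬝ᵥ v := by
      obtain ⟨i, hi'⟩ := Function.ne_iff.mp hv0
      have hle : v i * v i ≤ v ⬝ᵥ v :=
        Finset.single_le_sum (fun j (_ : j ∈ Finset.univ) => mul_self_nonneg (v j))
          (Finset.mem_univ i)
      have : 0 < v i * v i := mul_self_pos.mpr hi'
      linarith
    nlinarith
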